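/- arXiv:1402.4603 — 3 statements merged into one kernel-verified Lean document; each statement's English description precedes it below -/
import Mathlib

section
/- For every v ≥ 4 and every s, a (K₂, K_{1,3})-URD(v; 0, s) does not exist; that is, the complete graph K_v admits no decomposition into parallel classes each consisting only of copies of K_{1,3}. -/
open Finset

/-- The vertex set of a 3-star `K_{1,3}` given by its center and its leaf set. -/
def starVerts {V : Type} [DecidableEq V] (b : V × Finset V) : Finset V :=
  insert b.1 b.2

/-- The edge set of a 3-star `K_{1,3}` given by its center and its leaf set. -/
def starEdges {V : Type} [DecidableEq V] (b : V × Finset V) : Finset (Sym2 V) :=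
  b.2.image (fun l => s(b.1, l))

/-- The edge set of a complete block (e.g. a copy of `K₄`) on the vertex set `b`. -/
def blockEdges {V : Type} [DecidableEq V] (b : Finset V) : Finset (Sym2 V) :=
  ((b ×ˢ b).filter (fun p => p.1 ≠ p.2)).image (fun p => s(p.1, p.2))

/-- `M` is a parallel class of copies of `K₂` (a perfect matching) on the point set `P`:
all edges come from `E`, lie inside `P`, and every point of `P` is on exactly one edge. -/
def IsMatchingClass {V : Type} [DecidableEq V] (E : Finset (Sym2 V)) (P : Finset V)
    (M : Finset (Sym2 V)) : Prop :=
  (∀ e ∈ M, e ∈ E) ∧ (∀ e ∈ M, ∀ x ∈ e, x ∈ P) ∧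
  (∀ x ∈ P, ∃! e, e ∈ M ∧ x ∈ e)

/-- `C` is a parallel class of copies of `K_{1,3}` on the point set `P`: every block is a
3-star with edges from `E` and vertices in `P`, and every point of `P` is in exactly one
block (so the blocks are pairwise vertex-disjoint and their vertex sets partition `P`). -/
def IsStarClass {V : Type} [DecidableEq V] (E : Finset (Sym2 V)) (P : Finset V)
    (C : Finset (V × Finset V)) : Prop :=
  (∀ b ∈ C, b.2.card = 3 ∧ b.1 ∉ b.2 ∧ starEdges b ⊆ E ∧ starVerts b ⊆ P) ∧
  (∀ x ∈ P, ∃! b, b ∈ C ∧ x ∈ starVerts b)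

/-- `C` is a parallel class of copies of `K₄` on the point set `P`. -/
def IsK4Class {V : Type} [DecidableEq V] (E : Finset (Sym2 V)) (P : Finset V)
    (C : Finset (Finset V)) : Prop :=
  (∀ b ∈ C, b.card = 4 ∧ blockEdges b ⊆ E ∧ b ⊆ P) ∧
  (∀ x ∈ P, ∃! b, b ∈ C ∧ x ∈ b)

/-- A uniformly resolvable `(K₂, K_{1,3})`-decomposition of the edge set `E` into
`r₁` matching classes and `s₁` star classes on the point set `P` (partial classes), and
`r₂` matching classes and `s₂` star classes on the full vertex set (full classes), such
that every edge of `E` lies in exactly one block of exactly one class. -/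
def HasHoleyDecomp {V : Type} [Fintype V] [DecidableEq V] (E : Finset (Sym2 V))
    (P : Finset V) (r₁ s₁ r₂ s₂ : ℕ) : Prop :=
  ∃ (M₁ : Fin r₁ → Finset (Sym2 V)) (S₁ : Fin s₁ → Finset (V × Finset V))
    (M₂ : Fin r₂ → Finset (Sym2 V)) (S₂ : Fin s₂ → Finset (V × Finset V)),
    (∀ i, IsMatchingClass E P (M₁ i)) ∧ (∀ j, IsStarClass E P (S₁ j)) ∧
    (∀ i, IsMatchingClass E Finset.univ (M₂ i)) ∧
    (∀ j, IsStarClass E Finset.univ (S₂ j)) ∧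
    (∀ e ∈ E,
      ((∑ i, if e ∈ M₁ i then 1 else 0) + (∑ i, if e ∈ M₂ i then 1 else 0)
        + (∑ j, ((S₁ j).filter (fun b => e ∈ starEdges b)).card)
        + (∑ j, ((S₂ j).filter (fun b => e ∈ starEdges b)).card)) = 1)

/-- A uniformly resolvable `(K₂, K_{1,3})`-decomposition of the edge set `E` into `r`
parallel classes of copies of `K₂` and `s` parallel classes of copies of `K_{1,3}`,
each class partitioning the whole vertex set. -/
def HasUniformDecomp {V : Type} [Fintype V] [DecidableEq V] (E : Finset (Sym2 V))
    (r s : ℕ) : Prop :=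
  HasHoleyDecomp E Finset.univ 0 0 r s

/-- The edge set of the complete graph on the vertex type `V`. -/
def completeEdges (V : Type) [Fintype V] [DecidableEq V] : Finset (Sym2 V) :=
  (Finset.univ.filter (fun p : V × V => p.1 ≠ p.2)).image (fun p => s(p.1, p.2))

/-- The edge set of the complete multipartite graph with `u` groups of size `g`
(all edges between distinct groups, none within a group). -/
def multipartiteEdges (u g : ℕ) : Finset (Sym2 (Fin u × Fin g)) :=
  (Finset.univ.filter
      (fun p : (Fin u × Fin g) × (Fin u × Fin g) => p.1.1 ≠ p.2.1)).image
    (fun p => s(p.1, p.2))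

/-- The edge set of `K_{v+h}` minus the edges of a `K_h` on a hole of size `h`
(the hole consists of the `Sum.inr` vertices). -/
def holeyEdges (v h : ℕ) : Finset (Sym2 (Fin v ⊕ Fin h)) :=
  (Finset.univ.filter (fun p : (Fin v ⊕ Fin h) × (Fin v ⊕ Fin h) =>
      p.1 ≠ p.2 ∧ ¬(p.1.isRight ∧ p.2.isRight))).image (fun p => s(p.1, p.2))

/-- A `(K₂, K_{1,3})`-URD(v; r, s): a decomposition of the edge set of `K_v` into `r`
parallel classes of copies of `K₂` and `s` parallel classes of copies of `K_{1,3}`. -/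
def IsURD (v r s : ℕ) : Prop :=
  HasUniformDecomp (completeEdges (Fin v)) r s

/-- A `(K₂, K_{1,3})`-URGDD(r, s) of type `g^u`: a uniformly resolvable decomposition of
the complete multipartite graph with `u` groups of size `g` into `r` parallel classes of
copies of `K₂` and `s` parallel classes of copies of `K_{1,3}`. -/
def IsURGDD (g u r s : ℕ) : Prop :=
  HasUniformDecomp (multipartiteEdges u g) r s

/-- A `(K₂, K_{1,3})`-IURD(v + h, h; [r₁, s₁], [r₂, s₂]): a decomposition of `K_{v+h}`
minus a hole of size `h` into `r₁` matching classes and `s₁` star classes covering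
exactly the `v` points outside the hole (partial classes), and `r₂` matching classes and
`s₂` star classes covering all `v + h` points (full classes). -/
def IsIURD (v h r₁ s₁ r₂ s₂ : ℕ) : Prop :=
  HasHoleyDecomp (holeyEdges v h)
    (Finset.univ.filter (fun x : Fin v ⊕ Fin h => x.isLeft)) r₁ s₁ r₂ s₂

/-- A `4`-RGDD of type `g^u` with `h` parallel classes: a resolvable decomposition of the
complete multipartite graph with `u` groups of size `g` into copies of `K₄`, partitioned
into `h` parallel classes each of which partitions the whole vertex set. -/
def Is4RGDD (g u h : ℕ) : Prop :=
  ∃ C : Fin h → Finset (Finset (Fin u × Fin g)),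
    (∀ i, IsK4Class (multipartiteEdges u g) Finset.univ (C i)) ∧
    (∀ e ∈ multipartiteEdges u g,
      (∑ i, ((C i).filter (fun b => e ∈ blockEdges b)).card) = 1)

/-- A `4`-frame of type `g^u`: a decomposition of the complete multipartite graph with
`u` groups of size `g` into copies of `K₄`, partitioned into partial parallel classes,
`g / 3` of them missing each group, each partitioning the points outside that group. -/
def Is4Frame (g u : ℕ) : Prop :=
  ∃ C : Fin u → Fin (g / 3) → Finset (Finset (Fin u × Fin g)),
    (∀ i j, IsK4Class (multipartiteEdges u g)
        (Finset.univ.filter (fun x : Fin u × Fin g => x.1 ≠ i)) (C i j)) ∧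
    (∀ e ∈ multipartiteEdges u g,
      (∑ i, ∑ j, ((C i j).filter (fun b => e ∈ blockEdges b)).card) = 1)

/-- `sumsOf k X` is the set `k ∗ X` of all pairs obtained by adding `k` elements of `X`
together (repetitions allowed). -/
def sumsOf (k : ℕ) (X : Set (ℕ × ℕ)) : Set (ℕ × ℕ) :=
  {p | ∃ f : Fin k → ℕ × ℕ, (∀ i, f i ∈ X) ∧
    p = (∑ i, (f i).1, ∑ i, (f i).2)}

section Aux
variable {V : Type} [Fintype V] [DecidableEq V]

lemma mem_starEdges' {b : V × Finset V} {e : Sym2 V} :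
    e ∈ starEdges b ↔ ∃ l ∈ b.2, s(b.1, l) = e := by
  simp [starEdges]

lemma starEdges_card' (b : V × Finset V) (h3 : b.2.card = 3) :
    (starEdges b).card = 3 := by
  rw [starEdges, Finset.card_image_of_injective _ (fun y y' h => Sym2.congr_right.mp h), h3]

lemma filter_univ_mem_card' {a c : V} (h : a ≠ c) :
    (Finset.univ.filter (fun x => x ∈ s(a, c))).card = 2 := by
  have he : (Finset.univ.filter (fun x => x ∈ s(a, c))) = {a, c} := by
    ext x; simp [Sym2.mem_iff]
  rw [he, Finset.card_insert_of_notMem (by simp [h]), Finset.card_singleton]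

lemma starEdges_deg_sum' (b : V × Finset V) (h3 : b.2.card = 3) (hn : b.1 ∉ b.2) :
    ∑ x : V, ((starEdges b).filter (fun e => x ∈ e)).card = 6 := by
  simp_rw [Finset.card_filter]
  rw [Finset.sum_comm]
  have h2 : ∀ e ∈ starEdges b, (∑ x : V, if x ∈ e then 1 else 0) = 2 := by
    intro e he
    obtain ⟨l, hl, rfl⟩ := mem_starEdges'.mp he
    rw [← Finset.card_filter]
    exact filter_univ_mem_card' (fun h => hn (h ▸ hl))
  rw [Finset.sum_congr rfl h2, Finset.sum_const, starEdges_card' b h3, smul_eq_mul]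

lemma starEdges_deg_center' (b : V × Finset V) (h3 : b.2.card = 3) :
    ((starEdges b).filter (fun e => b.1 ∈ e)).card = 3 := by
  rw [Finset.filter_true_of_mem, starEdges_card' b h3]
  intro e he
  obtain ⟨l, _, rfl⟩ := mem_starEdges'.mp he
  exact Sym2.mem_mk_left _ _

lemma starEdges_deg_leaf' (b : V × Finset V) (hn : b.1 ∉ b.2) {x : V} (hx : x ∈ b.2) :
    ((starEdges b).filter (fun e => x ∈ e)).card = 1 := by
  have he : (starEdges b).filter (fun e => x ∈ e) = {s(b.1, x)} := by
    ext e
    simp only [Finset.mem_filter, Finset.mem_singleton, mem_starEdges']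
    constructor
    · rintro ⟨⟨l, hl, rfl⟩, hxe⟩
      rcases Sym2.mem_iff.mp hxe with h | h
      · exact absurd (h ▸ hx) hn
      · rw [h]
    · rintro rfl
      exact ⟨⟨x, hx, rfl⟩, Sym2.mem_mk_right _ _⟩
  rw [he, Finset.card_singleton]

lemma starEdges_deg_out' (b : V × Finset V) {x : V} (hx : x ∉ starVerts b) :
    ((starEdges b).filter (fun e => x ∈ e)).card = 0 := by
  rw [Finset.card_eq_zero, Finset.filter_eq_empty_iff]
  intro e he hxe
  obtain ⟨l, hl, rfl⟩ := mem_starEdges'.mp he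
  rcases Sym2.mem_iff.mp hxe with h | h
  · exact hx (by simp [starVerts, h])
  · exact hx (by simp [starVerts, h, hl])

lemma class_card' {E : Finset (Sym2 V)} {C : Finset (V × Finset V)}
    (hC : IsStarClass E Finset.univ C) : 4 * C.card = Fintype.card V := by
  have huniv : (Finset.univ : Finset V) = C.biUnion starVerts := by
    ext x
    simp only [Finset.mem_biUnion, Finset.mem_univ, true_iff]
    obtain ⟨b, ⟨hbC, hbx⟩, _⟩ := hC.2 x (Finset.mem_univ x)
    exact ⟨b, hbC, hbx⟩
  have hdisj : ∀ b ∈ C, ∀ b' ∈ C, b ≠ b' → Disjoint (starVerts b) (starVerts b') := by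
    intro b hb b' hb' hne
    rw [Finset.disjoint_left]
    intro x hx hx'
    obtain ⟨b₀, _, huniq⟩ := hC.2 x (Finset.mem_univ x)
    exact hne ((huniq b ⟨hb, hx⟩).trans (huniq b' ⟨hb', hx'⟩).symm)
  rw [← Finset.card_univ, huniv, Finset.card_biUnion hdisj]
  rw [Finset.sum_congr rfl (fun b hb => ?_), Finset.sum_const, smul_eq_mul, mul_comm]
  obtain ⟨h3, hn, _, _⟩ := hC.1 b hb
  rw [starVerts, Finset.card_insert_of_notMem hn, h3]

lemma class_deg_odd' {E : Finset (Sym2 V)} {C : Finset (V × Finset V)}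
    (hC : IsStarClass E Finset.univ C) (x : V) :
    (∑ b ∈ C, ((starEdges b).filter (fun e => x ∈ e)).card) % 2 = 1 := by
  obtain ⟨b₀, ⟨hb₀C, hb₀x⟩, huniq⟩ := hC.2 x (Finset.mem_univ x)
  rw [Finset.sum_eq_single b₀ (fun b hb hne => ?_) (fun h => absurd hb₀C h)]
  · obtain ⟨h3, hn, _, _⟩ := hC.1 b₀ hb₀C
    rcases Finset.mem_insert.mp hb₀x with rfl | hx
    · rw [starEdges_deg_center' b₀ h3]
    · rw [starEdges_deg_leaf' b₀ hn hx]
  · refine starEdges_deg_out' b (fun hx => hne ?_)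
    exact (huniq b ⟨hb, hx⟩)

lemma double_count' (F : Finset (Sym2 V)) (C : Finset (V × Finset V)) :
    ∑ e ∈ F, (C.filter (fun b => e ∈ starEdges b)).card
      = ∑ b ∈ C, (F.filter (fun e => e ∈ starEdges b)).card := by
  simp_rw [Finset.card_filter]
  exact Finset.sum_comm

lemma filter_filter_eq' {E : Finset (Sym2 V)} {b : V × Finset V}
    (hsub : starEdges b ⊆ E) (x : V) :
    (E.filter (fun e => x ∈ e)).filter (fun e => e ∈ starEdges b)
      = (starEdges b).filter (fun e => x ∈ e) := by
  ext e
  simp only [Finset.mem_filter]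
  exact ⟨fun ⟨⟨_, hx⟩, hb⟩ => ⟨hb, hx⟩, fun ⟨hb, hx⟩ => ⟨⟨hsub hb, hx⟩, hb⟩⟩

lemma completeEdges_deg' (v : ℕ) (x : Fin v) :
    ((completeEdges (Fin v)).filter (fun e => x ∈ e)).card = v - 1 := by
  have he : (completeEdges (Fin v)).filter (fun e => x ∈ e)
      = (Finset.univ.erase x).image (fun y => s(x, y)) := by
    ext e
    simp only [Finset.mem_filter, Finset.mem_image, Finset.mem_erase, completeEdges,
      Finset.mem_univ, and_true, true_and, Prod.exists]
    constructor
    · rintro ⟨⟨a, c, hac, rfl⟩, hx⟩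
      rcases Sym2.mem_iff.mp hx with rfl | rfl
      · exact ⟨c, hac.symm, rfl⟩
      · exact ⟨a, hac, Sym2.eq_swap⟩
    · rintro ⟨y, hyx, rfl⟩
      exact ⟨⟨x, y, fun h => hyx (h.symm), rfl⟩, Sym2.mem_mk_left _ _⟩
  rw [he, Finset.card_image_of_injective _ (fun y y' h => Sym2.congr_right.mp h),
    Finset.card_erase_of_mem (Finset.mem_univ x), Finset.card_univ, Fintype.card_fin]

end Aux

/-- For every `v ≥ 4` and every `s`, a `(K₂, K_{1,3})`-URD(v; 0, s) does not exist. -/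
theorem no_pure_star_URD (v s : ℕ) (hv : 4 ≤ v) : ¬ IsURD v 0 s := by
  rintro ⟨M₁, S₁, M₂, S₂, -, -, -, hS₂, hcov⟩
  set E := completeEdges (Fin v) with hEdef
  have hcov' : ∀ e ∈ E, (∑ j, ((S₂ j).filter (fun b => e ∈ starEdges b)).card) = 1 := by
    intro e he
    have := hcov e he
    simpa using this
  have hsub : ∀ j, ∀ b ∈ S₂ j, starEdges b ⊆ E := fun j b hb => ((hS₂ j).1 b hb).2.2.1
  -- degree identity
  have hdeg : ∀ x : Fin v, v - 1
      = ∑ j, ∑ b ∈ S₂ j, ((starEdges b).filter (fun e => x ∈ e)).card := by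
    intro x
    have h1 : (E.filter (fun e => x ∈ e)).card
        = ∑ e ∈ E.filter (fun e => x ∈ e),
            (∑ j, ((S₂ j).filter (fun b => e ∈ starEdges b)).card) := by
      rw [Finset.sum_congr rfl (fun e he => hcov' e (Finset.mem_of_mem_filter e he))]
      simp
    rw [← completeEdges_deg' v x, h1, Finset.sum_comm]
    refine Finset.sum_congr rfl (fun j _ => ?_)
    rw [double_count']
    exact Finset.sum_congr rfl (fun b hb => by rw [filter_filter_eq' (hsub j b hb)])
  -- parity: v - 1 ≡ s (mod 2)
  have hA : (v - 1) % 2 = s % 2 := by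
    rcases Nat.exists_eq_succ_of_ne_zero (Nat.ne_zero_of_lt hv) with ⟨n, rfl⟩
    have := hdeg 0
    rw [this, Finset.sum_nat_mod,
      Finset.sum_congr rfl (fun j _ => class_deg_odd' (hS₂ j) 0)]
    simp
  -- total count: 2 * (v * (v-1)) = 3 * s * v
  have hB : 2 * (v * (v - 1)) = 3 * s * v := by
    have h1 : v * (v - 1) = ∑ j, ∑ b ∈ S₂ j,
        (∑ x : Fin v, ((starEdges b).filter (fun e => x ∈ e)).card) := by
      calc v * (v - 1) = ∑ _x : Fin v, (v - 1) := by
            rw [Finset.sum_const, Finset.card_univ, Fintype.card_fin, smul_eq_mul]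
        _ = ∑ x : Fin v, ∑ j, ∑ b ∈ S₂ j,
              ((starEdges b).filter (fun e => x ∈ e)).card :=
            Finset.sum_congr rfl (fun x _ => hdeg x)
        _ = _ := by
            rw [Finset.sum_comm]
            exact Finset.sum_congr rfl (fun j _ => Finset.sum_comm)
    have h2 : ∀ j, ∑ b ∈ S₂ j,
        (∑ x : Fin v, ((starEdges b).filter (fun e => x ∈ e)).card) = 6 * (S₂ j).card := by
      intro j
      rw [Finset.sum_congr rfl (fun b hb => ?_), Finset.sum_const, smul_eq_mul, mul_comm]
      obtain ⟨h3, hn, -, -⟩ := (hS₂ j).1 b hb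
      exact starEdges_deg_sum' b h3 hn
    have h4 : ∀ j : Fin s, 4 * (S₂ j).card = v := by
      intro j
      rw [class_card' (hS₂ j), Fintype.card_fin]
    calc 2 * (v * (v - 1)) = ∑ j, 12 * (S₂ j).card := by
          rw [h1, Finset.mul_sum]
          exact Finset.sum_congr rfl (fun j _ => by rw [h2 j]; ring)
      _ = ∑ _j : Fin s, 3 * v := Finset.sum_congr rfl (fun j _ => by
          have := h4 j; omega)
      _ = 3 * s * v := by
          rw [Finset.sum_const, Finset.card_univ, Fintype.card_fin, smul_eq_mul]; ring
  have hB' : 2 * (v - 1) = 3 * s := by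
    have hv0 : 0 < v := by omega
    have h5 : v * (2 * (v - 1)) = v * (3 * s) := by
      calc v * (2 * (v - 1)) = 2 * (v * (v - 1)) := by ring
        _ = 3 * s * v := hB
        _ = v * (3 * s) := by ring
    exact Nat.eq_of_mul_eq_mul_left hv0 h5
  rcases Nat.eq_zero_or_pos s with rfl | hs
  · omega
  · have h4v : 4 ∣ v := ⟨(S₂ ⟨0, hs⟩).card, by
      exact ((class_card' (hS₂ ⟨0, hs⟩)).trans (Fintype.card_fin v)).symm⟩
    omega
end

section
/- Let v, g, t, u be non-negative integers with v = g·t·u, and set h = g(u−1)/3. Suppose there exist: (1) a 4-RGDD of type g^u (which has exactly h parallel classes); (2) for each i = 1, …, h, a (K₂, K_{1,3})-URGDD(r₁ⁱ, s₁ⁱ) of type t⁴; and (3) a (K₂, K_{1,3})-URD(g·t; r₂, s₂). Then there exists a (K₂, K_{1,3})-URD(v; r₂ + Σᵢ r₁ⁱ, s₂ + Σᵢ s₁ⁱ). -/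
open Finset

section Glue

variable {V V' β : Type} [DecidableEq V] [DecidableEq V'] [DecidableEq β]

/-- Push a star forward along a vertex map. -/
def mapStar (f : V → V') (p : V × Finset V) : V' × Finset V' := (f p.1, p.2.image f)

/-- Glue matching classes along a family of embeddings. -/
def glueM (B : Finset β) (f : β → V → V') (M : Finset (Sym2 V)) : Finset (Sym2 V') :=
  B.biUnion fun b => M.image (Sym2.map (f b))

/-- Glue star classes along a family of embeddings. -/
def glueS (B : Finset β) (f : β → V → V') (S : Finset (V × Finset V)) :
    Finset (V' × Finset V') :=
  B.biUnion fun b => S.image (mapStar (f b))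

lemma starEdges_mapStar (f : V → V') (p : V × Finset V) :
    starEdges (mapStar f p) = (starEdges p).image (Sym2.map f) := by
  simp only [starEdges, mapStar, Finset.image_image]
  apply Finset.image_congr
  intro l _
  simp [Sym2.map_pair_eq]

lemma starVerts_mapStar (f : V → V') (p : V × Finset V) :
    starVerts (mapStar f p) = (starVerts p).image f := by
  simp [starVerts, mapStar, Finset.image_insert]

lemma mapStar_injective {f : V → V'} (hf : Function.Injective f) :
    Function.Injective (mapStar f) := by
  intro p q h
  simp only [mapStar, Prod.mk.injEq] at h
  exact Prod.ext (hf h.1) (Finset.image_injective hf h.2)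

lemma glue_matching [Fintype V] [Fintype V'] {B : Finset β} {f : β → V → V'}
    (hinj : ∀ b ∈ B, Function.Injective (f b))
    (hpart : ∀ x : V', ∃! b, b ∈ B ∧ ∃ y, f b y = x)
    {E : Finset (Sym2 V)} {E' : Finset (Sym2 V')}
    (hE : ∀ b ∈ B, ∀ e ∈ E, Sym2.map (f b) e ∈ E')
    {M : Finset (Sym2 V)} (hM : IsMatchingClass E Finset.univ M) :
    IsMatchingClass E' Finset.univ (glueM B f M) := by
  refine ⟨?_, fun _ _ _ _ => Finset.mem_univ _, ?_⟩
  · intro e he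
    simp only [glueM, Finset.mem_biUnion, Finset.mem_image] at he
    obtain ⟨b, hb, e₀, he₀, rfl⟩ := he
    exact hE b hb e₀ (hM.1 e₀ he₀)
  · intro x _
    obtain ⟨b, ⟨hbB, y, hfy⟩, hbu⟩ := hpart x
    obtain ⟨e, ⟨heM, hye⟩, heu⟩ := hM.2.2 y (Finset.mem_univ y)
    refine ⟨Sym2.map (f b) e, ⟨?_, ?_⟩, ?_⟩
    · exact Finset.mem_biUnion.2 ⟨b, hbB, Finset.mem_image_of_mem _ heM⟩
    · exact Sym2.mem_map.2 ⟨y, hye, hfy⟩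
    · rintro e' ⟨he', hxe'⟩
      simp only [glueM, Finset.mem_biUnion, Finset.mem_image] at he'
      obtain ⟨b', hb', e₁, he₁, rfl⟩ := he'
      obtain ⟨z, hze₁, hfz⟩ := Sym2.mem_map.1 hxe'
      have hb'b : b' = b := hbu b' ⟨hb', z, hfz⟩
      subst hb'b
      have hzy : z = y := hinj b' hbB (hfz.trans hfy.symm)
      subst hzy
      rw [heu e₁ ⟨he₁, hze₁⟩]

lemma glue_star [Fintype V] [Fintype V'] {B : Finset β} {f : β → V → V'}
    (hinj : ∀ b ∈ B, Function.Injective (f b))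
    (hpart : ∀ x : V', ∃! b, b ∈ B ∧ ∃ y, f b y = x)
    {E : Finset (Sym2 V)} {E' : Finset (Sym2 V')}
    (hE : ∀ b ∈ B, ∀ e ∈ E, Sym2.map (f b) e ∈ E')
    {S : Finset (V × Finset V)} (hS : IsStarClass E Finset.univ S) :
    IsStarClass E' Finset.univ (glueS B f S) := by
  constructor
  · intro p hp
    simp only [glueS, Finset.mem_biUnion, Finset.mem_image] at hp
    obtain ⟨b, hb, q, hq, rfl⟩ := hp
    obtain ⟨h3, hnm, hse, _⟩ := hS.1 q hq
    refine ⟨?_, ?_, ?_, fun _ _ => Finset.mem_univ _⟩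
    · show (q.2.image (f b)).card = 3
      rw [Finset.card_image_of_injective q.2 (hinj b hb), h3]
    · show f b q.1 ∉ q.2.image (f b)
      intro h
      obtain ⟨l, hl, hfl⟩ := Finset.mem_image.1 h
      exact hnm ((hinj b hb hfl) ▸ hl)
    · rw [starEdges_mapStar]
      intro e he
      obtain ⟨e₀, he₀, rfl⟩ := Finset.mem_image.1 he
      exact hE b hb e₀ (hse he₀)
  · intro x _
    obtain ⟨b, ⟨hbB, y, hfy⟩, hbu⟩ := hpart x
    obtain ⟨q, ⟨hqS, hyq⟩, hqu⟩ := hS.2 y (Finset.mem_univ y)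
    refine ⟨mapStar (f b) q, ⟨?_, ?_⟩, ?_⟩
    · exact Finset.mem_biUnion.2 ⟨b, hbB, Finset.mem_image_of_mem _ hqS⟩
    · rw [starVerts_mapStar]
      exact hfy ▸ Finset.mem_image_of_mem _ hyq
    · rintro p ⟨hp, hxp⟩
      simp only [glueS, Finset.mem_biUnion, Finset.mem_image] at hp
      obtain ⟨b', hb', q', hq', rfl⟩ := hp
      rw [starVerts_mapStar] at hxp
      obtain ⟨z, hzq', hfz⟩ := Finset.mem_image.1 hxp
      have hb'b : b' = b := hbu b' ⟨hb', z, hfz⟩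
      subst hb'b
      have hzy : z = y := hinj b' hbB (hfz.trans hfy.symm)
      subst hzy
      rw [hqu q' ⟨hq', hzq'⟩]

lemma mem_glueM_iff {B : Finset β} {f : β → V → V'} {E M : Finset (Sym2 V)}
    (hsub : ∀ e ∈ M, e ∈ E) {b₀ : β} {e₀ : Sym2 V} {e' : Sym2 V'}
    (hb₀ : b₀ ∈ B) (hmap : Sym2.map (f b₀) e₀ = e')
    (huniq : ∀ b ∈ B, ∀ e ∈ E, Sym2.map (f b) e = e' → b = b₀ ∧ e = e₀) :
    (e' ∈ glueM B f M ↔ e₀ ∈ M) := by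
  constructor
  · intro h
    simp only [glueM, Finset.mem_biUnion, Finset.mem_image] at h
    obtain ⟨b, hb, e, he, hmap'⟩ := h
    obtain ⟨_, rfl⟩ := huniq b hb e (hsub e he) hmap'
    exact he
  · intro h
    exact Finset.mem_biUnion.2 ⟨b₀, hb₀, Finset.mem_image.2 ⟨e₀, h, hmap⟩⟩

lemma not_mem_glueM {B : Finset β} {f : β → V → V'} {E M : Finset (Sym2 V)}
    (hsub : ∀ e ∈ M, e ∈ E) {e' : Sym2 V'}
    (hz : ∀ b ∈ B, ∀ e ∈ E, Sym2.map (f b) e ≠ e') : e' ∉ glueM B f M := by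
  intro h
  simp only [glueM, Finset.mem_biUnion, Finset.mem_image] at h
  obtain ⟨b, hb, e, he, hmap'⟩ := h
  exact hz b hb e (hsub e he) hmap'

lemma glueS_filter_card {B : Finset β} {f : β → V → V'} {E : Finset (Sym2 V)}
    {S : Finset (V × Finset V)} (hsub : ∀ p ∈ S, starEdges p ⊆ E)
    {b₀ : β} {e₀ : Sym2 V} {e' : Sym2 V'}
    (hb₀ : b₀ ∈ B) (hinj : Function.Injective (f b₀)) (hmap : Sym2.map (f b₀) e₀ = e')
    (huniq : ∀ b ∈ B, ∀ e ∈ E, Sym2.map (f b) e = e' → b = b₀ ∧ e = e₀) :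
    ((glueS B f S).filter (fun p => e' ∈ starEdges p)).card
      = (S.filter (fun p => e₀ ∈ starEdges p)).card := by
  have hset : (glueS B f S).filter (fun p => e' ∈ starEdges p)
      = (S.filter (fun p => e₀ ∈ starEdges p)).image (mapStar (f b₀)) := by
    ext x
    simp only [Finset.mem_filter, Finset.mem_image, glueS, Finset.mem_biUnion]
    constructor
    · rintro ⟨⟨b, hb, p, hp, rfl⟩, he⟩
      rw [starEdges_mapStar] at he
      obtain ⟨e₁, he₁, hmap'⟩ := Finset.mem_image.1 he
      obtain ⟨rfl, rfl⟩ := huniq b hb e₁ (hsub p hp he₁) hmap'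
      exact ⟨p, ⟨hp, he₁⟩, rfl⟩
    · rintro ⟨p, ⟨hp, he⟩, rfl⟩
      refine ⟨⟨b₀, hb₀, p, hp, rfl⟩, ?_⟩
      rw [starEdges_mapStar]
      exact Finset.mem_image.2 ⟨e₀, he, hmap⟩
  rw [hset]
  exact Finset.card_image_of_injective _ (mapStar_injective hinj)

lemma glueS_filter_zero {B : Finset β} {f : β → V → V'} {E : Finset (Sym2 V)}
    {S : Finset (V × Finset V)} (hsub : ∀ p ∈ S, starEdges p ⊆ E) {e' : Sym2 V'}
    (hz : ∀ b ∈ B, ∀ e ∈ E, Sym2.map (f b) e ≠ e') :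
    ((glueS B f S).filter (fun p => e' ∈ starEdges p)).card = 0 := by
  rw [Finset.card_eq_zero, Finset.filter_eq_empty_iff]
  rintro x hx
  simp only [glueS, Finset.mem_biUnion, Finset.mem_image] at hx
  obtain ⟨b, hb, p, hp, rfl⟩ := hx
  rw [starEdges_mapStar]
  intro he
  obtain ⟨e₁, he₁, hmap'⟩ := Finset.mem_image.1 he
  exact hz b hb e₁ (hsub p hp he₁) hmap'

lemma glue_total_one [Fintype V] [Fintype V'] {B : Finset β} {f : β → V → V'}
    {E : Finset (Sym2 V)} {r s : ℕ}
    {M : Fin r → Finset (Sym2 V)} {S : Fin s → Finset (V × Finset V)}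
    (hM : ∀ i, ∀ e ∈ M i, e ∈ E) (hS : ∀ j, ∀ p ∈ S j, starEdges p ⊆ E)
    {b₀ : β} {e₀ : Sym2 V} {e' : Sym2 V'}
    (hb₀ : b₀ ∈ B) (hinj : Function.Injective (f b₀)) (hmap : Sym2.map (f b₀) e₀ = e')
    (huniq : ∀ b ∈ B, ∀ e ∈ E, Sym2.map (f b) e = e' → b = b₀ ∧ e = e₀)
    (hcount : ((∑ i, if e₀ ∈ M i then 1 else 0)
      + ∑ j, ((S j).filter (fun p => e₀ ∈ starEdges p)).card) = 1) :
    ((∑ i, if e' ∈ glueM B f (M i) then 1 else 0)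
      + ∑ j, ((glueS B f (S j)).filter (fun p => e' ∈ starEdges p)).card) = 1 := by
  have h1 : (∑ i, if e' ∈ glueM B f (M i) then 1 else 0)
      = (∑ i, if e₀ ∈ M i then (1:ℕ) else 0) :=
    Finset.sum_congr rfl fun i _ => by
      rw [if_congr (mem_glueM_iff (hM i) hb₀ hmap huniq) rfl rfl]
  have h2 : (∑ j, ((glueS B f (S j)).filter (fun p => e' ∈ starEdges p)).card)
      = ∑ j, ((S j).filter (fun p => e₀ ∈ starEdges p)).card :=
    Finset.sum_congr rfl fun j _ => glueS_filter_card (hS j) hb₀ hinj hmap huniq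
  rw [h1, h2]
  exact hcount

lemma glue_total_zero [Fintype V] [Fintype V'] {B : Finset β} {f : β → V → V'}
    {E : Finset (Sym2 V)} {r s : ℕ}
    {M : Fin r → Finset (Sym2 V)} {S : Fin s → Finset (V × Finset V)}
    (hM : ∀ i, ∀ e ∈ M i, e ∈ E) (hS : ∀ j, ∀ p ∈ S j, starEdges p ⊆ E)
    {e' : Sym2 V'} (hz : ∀ b ∈ B, ∀ e ∈ E, Sym2.map (f b) e ≠ e') :
    ((∑ i, if e' ∈ glueM B f (M i) then 1 else 0)
      + ∑ j, ((glueS B f (S j)).filter (fun p => e' ∈ starEdges p)).card) = 0 := by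
  rw [Nat.add_eq_zero]
  constructor
  · exact Finset.sum_eq_zero fun i _ => by
      rw [if_neg (not_mem_glueM (hM i) hz)]
  · exact Finset.sum_eq_zero fun j _ => glueS_filter_zero (hS j) hz

end Glue

section Aux

lemma mem_completeEdges {V : Type} [Fintype V] [DecidableEq V] {x y : V} :
    s(x, y) ∈ completeEdges V ↔ x ≠ y := by
  simp only [completeEdges, Finset.mem_image, Finset.mem_filter, Finset.mem_univ, true_and]
  constructor
  · rintro ⟨p, hp, he⟩
    rw [Sym2.eq_iff] at he
    rcases he with ⟨rfl, rfl⟩ | ⟨rfl, rfl⟩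
    · exact hp
    · exact hp.symm
  · intro h
    exact ⟨(x, y), h, rfl⟩

lemma completeEdges_rep {V : Type} [Fintype V] [DecidableEq V] {e : Sym2 V}
    (he : e ∈ completeEdges V) : ∃ x y, x ≠ y ∧ e = s(x, y) := by
  induction e using Sym2.ind with
  | _ x y => exact ⟨x, y, mem_completeEdges.1 he, rfl⟩

lemma mem_multipartiteEdges {u g : ℕ} {x y : Fin u × Fin g} :
    s(x, y) ∈ multipartiteEdges u g ↔ x.1 ≠ y.1 := by
  simp only [multipartiteEdges, Finset.mem_image, Finset.mem_filter, Finset.mem_univ, true_and]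
  constructor
  · rintro ⟨p, hp, he⟩
    rw [Sym2.eq_iff] at he
    rcases he with ⟨rfl, rfl⟩ | ⟨rfl, rfl⟩
    · exact hp
    · exact hp.symm
  · intro h
    exact ⟨(x, y), h, rfl⟩

lemma multipartiteEdges_rep {u g : ℕ} {e : Sym2 (Fin u × Fin g)}
    (he : e ∈ multipartiteEdges u g) : ∃ x y, x.1 ≠ y.1 ∧ e = s(x, y) := by
  induction e using Sym2.ind with
  | _ x y => exact ⟨x, y, mem_multipartiteEdges.1 he, rfl⟩

lemma mem_blockEdges {V : Type} [DecidableEq V] {b : Finset V} {x y : V} :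
    s(x, y) ∈ blockEdges b ↔ x ∈ b ∧ y ∈ b ∧ x ≠ y := by
  simp only [blockEdges, Finset.mem_image, Finset.mem_filter, Finset.mem_product]
  constructor
  · rintro ⟨p, ⟨⟨h1, h2⟩, hne⟩, he⟩
    rw [Sym2.eq_iff] at he
    rcases he with ⟨rfl, rfl⟩ | ⟨rfl, rfl⟩
    · exact ⟨h1, h2, hne⟩
    · exact ⟨h2, h1, hne.symm⟩
  · rintro ⟨h1, h2, hne⟩
    exact ⟨(x, y), ⟨⟨h1, h2⟩, hne⟩, rfl⟩

lemma nat_sum_eq_one {ι : Type} [Fintype ι] [DecidableEq ι] {f : ι → ℕ}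
    (h : ∑ i, f i = 1) : ∃ i, f i = 1 ∧ ∀ j, j ≠ i → f j = 0 := by
  have hex : ∃ i, f i ≠ 0 := by
    by_contra h'
    push_neg at h'
    rw [Finset.sum_eq_zero (fun i _ => h' i)] at h
    omega
  obtain ⟨i, hi⟩ := hex
  have h1 : f i ≤ 1 := h ▸ Finset.single_le_sum (fun j _ => Nat.zero_le _) (Finset.mem_univ i)
  refine ⟨i, by omega, fun j hj => ?_⟩
  have h2 : f i + ∑ x ∈ Finset.univ.erase i, f x = 1 := by
    rw [Finset.add_sum_erase _ f (Finset.mem_univ i)]; exact h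
  have h3 : ∑ x ∈ Finset.univ.erase i, f x = 0 := by omega
  exact Finset.sum_eq_zero_iff.1 h3 j (Finset.mem_erase.2 ⟨hj, Finset.mem_univ j⟩)

/-- An enumeration of the four points of a `4`-element finset, with a junk default. -/
noncomputable def ordOf {X : Type} [DecidableEq X] (x₀ : X) (b : Finset X) (k : Fin 4) : X :=
  if hb : Fintype.card b = 4 then ((Fintype.equivFinOfCardEq hb).symm k : X) else x₀

lemma ordOf_mem {X : Type} [DecidableEq X] (x₀ : X) {b : Finset X} (hb : b.card = 4)
    (k : Fin 4) : ordOf x₀ b k ∈ b := by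
  have hb' : Fintype.card b = 4 := by rwa [Fintype.card_coe]
  rw [ordOf, dif_pos hb']
  exact Finset.coe_mem _

lemma ordOf_inj {X : Type} [DecidableEq X] (x₀ : X) {b : Finset X} (hb : b.card = 4) :
    Function.Injective (ordOf x₀ b) := by
  have hb' : Fintype.card b = 4 := by rwa [Fintype.card_coe]
  intro k l h
  rw [ordOf, dif_pos hb', ordOf, dif_pos hb'] at h
  exact (Fintype.equivFinOfCardEq hb').symm.injective (Subtype.coe_injective h)

lemma ordOf_surj {X : Type} [DecidableEq X] (x₀ : X) {b : Finset X} (hb : b.card = 4)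
    {x : X} (hx : x ∈ b) : ∃ k, ordOf x₀ b k = x := by
  have hb' : Fintype.card b = 4 := by rwa [Fintype.card_coe]
  refine ⟨Fintype.equivFinOfCardEq hb' ⟨x, hx⟩, ?_⟩
  rw [ordOf, dif_pos hb', Equiv.symm_apply_apply]

lemma hasUniformDecomp_of_families {V : Type} [Fintype V] [DecidableEq V]
    (E : Finset (Sym2 V)) {ι κ : Type} [Fintype ι] [Fintype κ] {r s : ℕ}
    (eι : ι ≃ Fin r) (eκ : κ ≃ Fin s)
    (M : ι → Finset (Sym2 V)) (S : κ → Finset (V × Finset V))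
    (hM : ∀ i, IsMatchingClass E Finset.univ (M i))
    (hS : ∀ j, IsStarClass E Finset.univ (S j))
    (hc : ∀ e ∈ E, ((∑ i, if e ∈ M i then 1 else 0)
      + ∑ j, ((S j).filter (fun p => e ∈ starEdges p)).card) = 1) :
    HasUniformDecomp E r s := by
  refine ⟨Fin.elim0, Fin.elim0, fun i => M (eι.symm i), fun j => S (eκ.symm j),
    fun i => i.elim0, fun j => j.elim0, fun i => hM _, fun j => hS _, ?_⟩
  intro e he
  have h1 : (∑ i : Fin r, if e ∈ M (eι.symm i) then (1 : ℕ) else 0)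
      = ∑ i, if e ∈ M i then 1 else 0 :=
    Fintype.sum_equiv eι.symm _ _ (fun i => rfl)
  have h2 : (∑ j : Fin s, ((S (eκ.symm j)).filter (fun p => e ∈ starEdges p)).card)
      = ∑ j, ((S j).filter (fun p => e ∈ starEdges p)).card :=
    Fintype.sum_equiv eκ.symm _ _ (fun j => rfl)
  simp only [Finset.univ_eq_empty, Finset.sum_empty, zero_add, add_zero]
  rw [h1, h2]
  exact hc e he

lemma combine {V' V₁ V₂ β₁ β₂ : Type} [Fintype V'] [DecidableEq V']
    [Fintype V₁] [DecidableEq V₁] [Fintype V₂] [DecidableEq V₂]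
    [DecidableEq β₁] [DecidableEq β₂]
    {E' : Finset (Sym2 V')} {E₁ : Finset (Sym2 V₁)} {E₂ : Finset (Sym2 V₂)}
    {h r₂ s₂ : ℕ} {r₁ s₁ : Fin h → ℕ}
    {B₁ : Finset β₁} {f₁ : β₁ → V₁ → V'}
    {B₂ : Fin h → Finset β₂} {f₂ : β₂ → V₂ → V'}
    (hinj₁ : ∀ b ∈ B₁, Function.Injective (f₁ b))
    (hpart₁ : ∀ x : V', ∃! b, b ∈ B₁ ∧ ∃ y, f₁ b y = x)
    (hE₁ : ∀ b ∈ B₁, ∀ e ∈ E₁, Sym2.map (f₁ b) e ∈ E')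
    (hinj₂ : ∀ i, ∀ b ∈ B₂ i, Function.Injective (f₂ b))
    (hpart₂ : ∀ i, ∀ x : V', ∃! b, b ∈ B₂ i ∧ ∃ y, f₂ b y = x)
    (hE₂ : ∀ i, ∀ b ∈ B₂ i, ∀ e ∈ E₂, Sym2.map (f₂ b) e ∈ E')
    {M₁ : Fin r₂ → Finset (Sym2 V₁)} {S₁ : Fin s₂ → Finset (V₁ × Finset V₁)}
    (hM₁ : ∀ j, IsMatchingClass E₁ Finset.univ (M₁ j))
    (hS₁ : ∀ j, IsStarClass E₁ Finset.univ (S₁ j))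
    (hc₁ : ∀ e ∈ E₁, ((∑ j, if e ∈ M₁ j then 1 else 0)
      + ∑ j, ((S₁ j).filter (fun p => e ∈ starEdges p)).card) = 1)
    {M₂ : ∀ i : Fin h, Fin (r₁ i) → Finset (Sym2 V₂)}
    {S₂ : ∀ i : Fin h, Fin (s₁ i) → Finset (V₂ × Finset V₂)}
    (hM₂ : ∀ i j, IsMatchingClass E₂ Finset.univ (M₂ i j))
    (hS₂ : ∀ i j, IsStarClass E₂ Finset.univ (S₂ i j))
    (hc₂ : ∀ i, ∀ e ∈ E₂, ((∑ j, if e ∈ M₂ i j then 1 else 0)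
      + ∑ j, ((S₂ i j).filter (fun p => e ∈ starEdges p)).card) = 1)
    (hsplit : ∀ e' ∈ E',
      (∃ b₀ ∈ B₁, ∃ e₀ ∈ E₁, Sym2.map (f₁ b₀) e₀ = e'
          ∧ (∀ b ∈ B₁, ∀ e ∈ E₁, Sym2.map (f₁ b) e = e' → b = b₀ ∧ e = e₀)
          ∧ (∀ i, ∀ b ∈ B₂ i, ∀ e ∈ E₂, Sym2.map (f₂ b) e ≠ e'))
      ∨ (∃ i₀ : Fin h, ∃ b₀ ∈ B₂ i₀, ∃ e₀ ∈ E₂, Sym2.map (f₂ b₀) e₀ = e'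
          ∧ (∀ b ∈ B₂ i₀, ∀ e ∈ E₂, Sym2.map (f₂ b) e = e' → b = b₀ ∧ e = e₀)
          ∧ (∀ i, i ≠ i₀ → ∀ b ∈ B₂ i, ∀ e ∈ E₂, Sym2.map (f₂ b) e ≠ e')
          ∧ (∀ b ∈ B₁, ∀ e ∈ E₁, Sym2.map (f₁ b) e ≠ e'))) :
    HasUniformDecomp E' (r₂ + ∑ i, r₁ i) (s₂ + ∑ i, s₁ i) := by
  classical
  refine hasUniformDecomp_of_families E'
    (ι := Fin r₂ ⊕ (Σ i : Fin h, Fin (r₁ i))) (κ := Fin s₂ ⊕ (Σ i : Fin h, Fin (s₁ i)))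
    (Fintype.equivFinOfCardEq (by simp)) (Fintype.equivFinOfCardEq (by simp))
    (Sum.elim (fun j => glueM B₁ f₁ (M₁ j)) (fun p => glueM (B₂ p.1) f₂ (M₂ p.1 p.2)))
    (Sum.elim (fun j => glueS B₁ f₁ (S₁ j)) (fun p => glueS (B₂ p.1) f₂ (S₂ p.1 p.2)))
    ?_ ?_ ?_
  · rintro (j | ⟨i, j⟩)
    · exact glue_matching hinj₁ hpart₁ hE₁ (hM₁ j)
    · exact glue_matching (hinj₂ i) (hpart₂ i) (hE₂ i) (hM₂ i j)
  · rintro (j | ⟨i, j⟩)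
    · exact glue_star hinj₁ hpart₁ hE₁ (hS₁ j)
    · exact glue_star (hinj₂ i) (hpart₂ i) (hE₂ i) (hS₂ i j)
  · intro e' he'
    rw [Fintype.sum_sum_type, Fintype.sum_sum_type]
    simp only [Sum.elim_inl, Sum.elim_inr]
    have eM : (∑ p : (Σ i : Fin h, Fin (r₁ i)),
          if e' ∈ glueM (B₂ p.1) f₂ (M₂ p.1 p.2) then (1 : ℕ) else 0)
        = ∑ i, ∑ j, if e' ∈ glueM (B₂ i) f₂ (M₂ i j) then (1 : ℕ) else 0 := by
      rw [← Finset.univ_sigma_univ, Finset.sum_sigma]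
    have eS : (∑ p : (Σ i : Fin h, Fin (s₁ i)),
          ((glueS (B₂ p.1) f₂ (S₂ p.1 p.2)).filter (fun q => e' ∈ starEdges q)).card)
        = ∑ i, ∑ j, ((glueS (B₂ i) f₂ (S₂ i j)).filter (fun q => e' ∈ starEdges q)).card := by
      rw [← Finset.univ_sigma_univ, Finset.sum_sigma]
    change ((∑ a, if e' ∈ glueM B₁ f₁ (M₁ a) then (1 : ℕ) else 0)
        + ∑ p : (Σ i : Fin h, Fin (r₁ i)),
          if e' ∈ glueM (B₂ p.1) f₂ (M₂ p.1 p.2) then (1 : ℕ) else 0)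
      + ((∑ j, ((glueS B₁ f₁ (S₁ j)).filter (fun q => e' ∈ starEdges q)).card)
        + ∑ p : (Σ i : Fin h, Fin (s₁ i)),
          ((glueS (B₂ p.1) f₂ (S₂ p.1 p.2)).filter (fun q => e' ∈ starEdges q)).card) = 1
    rw [eM, eS]
    have hdistrib : (∑ i : Fin h, ((∑ j, if e' ∈ glueM (B₂ i) f₂ (M₂ i j) then (1 : ℕ) else 0)
          + ∑ j, ((glueS (B₂ i) f₂ (S₂ i j)).filter (fun q => e' ∈ starEdges q)).card))
        = (∑ i, ∑ j, if e' ∈ glueM (B₂ i) f₂ (M₂ i j) then (1 : ℕ) else 0)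
          + ∑ i, ∑ j, ((glueS (B₂ i) f₂ (S₂ i j)).filter (fun q => e' ∈ starEdges q)).card :=
      Finset.sum_add_distrib
    rcases hsplit e' he' with ⟨b₀, hb₀, e₀, he₀, hmap, huniq, hz⟩ |
      ⟨i₀, b₀, hb₀, e₀, he₀, hmap, huniq, hzi, hz1⟩
    · have hone : ((∑ j, if e' ∈ glueM B₁ f₁ (M₁ j) then (1 : ℕ) else 0)
          + ∑ j, ((glueS B₁ f₁ (S₁ j)).filter (fun q => e' ∈ starEdges q)).card) = 1 :=
        glue_total_one (fun j => (hM₁ j).1) (fun j p hp => ((hS₁ j).1 p hp).2.2.1)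
          hb₀ (hinj₁ b₀ hb₀) hmap huniq (hc₁ e₀ he₀)
      have hzero : (∑ i : Fin h, ((∑ j, if e' ∈ glueM (B₂ i) f₂ (M₂ i j) then (1 : ℕ) else 0)
          + ∑ j, ((glueS (B₂ i) f₂ (S₂ i j)).filter (fun q => e' ∈ starEdges q)).card)) = 0 :=
        Finset.sum_eq_zero fun i _ =>
          glue_total_zero (fun j => (hM₂ i j).1) (fun j p hp => ((hS₂ i j).1 p hp).2.2.1) (hz i)
      omega
    · have hone : ((∑ j, if e' ∈ glueM (B₂ i₀) f₂ (M₂ i₀ j) then (1 : ℕ) else 0)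
          + ∑ j, ((glueS (B₂ i₀) f₂ (S₂ i₀ j)).filter (fun q => e' ∈ starEdges q)).card) = 1 :=
        glue_total_one (fun j => (hM₂ i₀ j).1) (fun j p hp => ((hS₂ i₀ j).1 p hp).2.2.1)
          hb₀ (hinj₂ i₀ b₀ hb₀) hmap huniq (hc₂ i₀ e₀ he₀)
      have hzero1 : ((∑ j, if e' ∈ glueM B₁ f₁ (M₁ j) then (1 : ℕ) else 0)
          + ∑ j, ((glueS B₁ f₁ (S₁ j)).filter (fun q => e' ∈ starEdges q)).card) = 0 :=
        glue_total_zero (fun j => (hM₁ j).1) (fun j p hp => ((hS₁ j).1 p hp).2.2.1) hz1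
      have hsum : (∑ i : Fin h, ((∑ j, if e' ∈ glueM (B₂ i) f₂ (M₂ i j) then (1 : ℕ) else 0)
          + ∑ j, ((glueS (B₂ i) f₂ (S₂ i j)).filter (fun q => e' ∈ starEdges q)).card)) = 1 := by
        rw [Finset.sum_eq_single_of_mem i₀ (Finset.mem_univ i₀)]
        · exact hone
        · intro i _ hii
          exact glue_total_zero (fun j => (hM₂ i j).1)
            (fun j p hp => ((hS₂ i j).1 p hp).2.2.1) (hzi i hii)
      omega

end Aux

/-- Filling construction from a `4`-RGDD: if there exist a `4`-RGDD of type `g^u` (with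
its `h = g(u−1)/3` parallel classes), a `(K₂, K_{1,3})`-URGDD(r₁ⁱ, s₁ⁱ) of type `t⁴` for
each `i = 1, …, h`, and a `(K₂, K_{1,3})`-URD(gt; r₂, s₂), then there exists a
`(K₂, K_{1,3})`-URD(v; r₂ + Σᵢ r₁ⁱ, s₂ + Σᵢ s₁ⁱ) for `v = gtu`. -/
theorem RGDD_construction (g t u v h : ℕ) (hv : v = g * t * u)
    (hh : h = g * (u - 1) / 3)
    (r₁ s₁ : Fin h → ℕ) (r₂ s₂ : ℕ)
    (h1 : Is4RGDD g u h)
    (h2 : ∀ i, IsURGDD t 4 (r₁ i) (s₁ i))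
    (h3 : IsURD (g * t) r₂ s₂) :
    IsURD v (r₂ + ∑ i, r₁ i) (s₂ + ∑ i, s₁ i) := by
  classical
  by_cases hv0 : v = 0
  · subst hv0
    refine hasUniformDecomp_of_families _ (Equiv.refl _) (Equiv.refl _)
      (fun _ => (∅ : Finset (Sym2 (Fin 0))))
      (fun _ => (∅ : Finset (Fin 0 × Finset (Fin 0)))) ?_ ?_ ?_
    · intro i
      exact ⟨fun e he => absurd he (Finset.notMem_empty e),
        fun e he => absurd he (Finset.notMem_empty e), fun x _ => x.elim0⟩
    · intro j
      exact ⟨fun b hb => absurd hb (Finset.notMem_empty b), fun x _ => x.elim0⟩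
    · intro e he
      exfalso
      induction e using Sym2.ind with
      | _ a b => exact a.elim0
  · have hgtu : g * t * u ≠ 0 := by rw [← hv]; exact hv0
    have hg0 : g ≠ 0 := by rintro rfl; simp at hgtu
    have ht0 : t ≠ 0 := by rintro rfl; simp at hgtu
    have hu0 : u ≠ 0 := by rintro rfl; simp at hgtu
    have hup : 0 < u := Nat.pos_of_ne_zero hu0
    have hgp : 0 < g := Nat.pos_of_ne_zero hg0
    obtain ⟨C, hC, hCc⟩ := h1
    simp only [IsURGDD, HasUniformDecomp, HasHoleyDecomp] at h2
    choose M0 S0 Mb Sb hb1 hb2 hb3 hb4 hb5 using h2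
    have hbc : ∀ i, ∀ e ∈ multipartiteEdges 4 t,
        ((∑ j, if e ∈ Mb i j then (1 : ℕ) else 0)
          + ∑ j, ((Sb i j).filter (fun p => e ∈ starEdges p)).card) = 1 := by
      intro i e he
      have hcount := hb5 i e he
      simpa only [Finset.univ_eq_empty, Finset.sum_empty, zero_add, add_zero] using hcount
    simp only [IsURD, HasUniformDecomp, HasHoleyDecomp] at h3
    obtain ⟨M0g, S0g, Mg, Sg, -, -, hg3, hg4, hg5⟩ := h3
    have hgc : ∀ e ∈ completeEdges (Fin (g * t)),
        ((∑ j, if e ∈ Mg j then (1 : ℕ) else 0)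
          + ∑ j, ((Sg j).filter (fun p => e ∈ starEdges p)).card) = 1 := by
      intro e he
      have hcount := hg5 e he
      simpa only [Finset.univ_eq_empty, Finset.sum_empty, zero_add, add_zero] using hcount
    have hcard : Fintype.card ((Fin u × Fin g) × Fin t) = v := by
      simp only [Fintype.card_prod, Fintype.card_fin, hv]; ring
    obtain ⟨ψ⟩ : Nonempty (((Fin u × Fin g) × Fin t) ≃ Fin v) :=
      ⟨Fintype.equivFinOfCardEq hcard⟩
    obtain ⟨π⟩ : Nonempty ((Fin g × Fin t) ≃ Fin (g * t)) := ⟨finProdFinEquiv⟩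
    obtain ⟨xj⟩ : Nonempty (Fin u × Fin g) := ⟨(⟨0, hup⟩, ⟨0, hgp⟩)⟩
    obtain ⟨fgrp, hfgrp⟩ : ∃ f : Fin u → Fin (g * t) → Fin v,
        ∀ b y, f b y = ψ ((b, (π.symm y).1), (π.symm y).2) := ⟨_, fun _ _ => rfl⟩
    obtain ⟨fblk, hfblk⟩ : ∃ f : Finset (Fin u × Fin g) → (Fin 4 × Fin t) → Fin v,
        ∀ b p, f b p = ψ (ordOf xj b p.1, p.2) := ⟨_, fun _ _ => rfl⟩
    have hCb : ∀ i, ∀ b ∈ C i, b.card = 4 := fun i b hb => ((hC i).1 b hb).1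
    have hCe : ∀ i, ∀ b ∈ C i, blockEdges b ⊆ multipartiteEdges u g :=
      fun i b hb => ((hC i).1 b hb).2.1
    -- group subsystem facts
    have hinjg : ∀ b : Fin u, Function.Injective (fgrp b) := by
      intro b y y' hyy
      rw [hfgrp, hfgrp] at hyy
      have h1 := ψ.injective hyy
      refine π.symm.injective (Prod.ext ?_ ?_)
      · exact congrArg (fun z => z.1.2) h1
      · exact congrArg (fun z => z.2) h1
    have hpartg : ∀ x : Fin v,
        ∃! b, b ∈ (Finset.univ : Finset (Fin u)) ∧ ∃ y, fgrp b y = x := by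
      intro x
      refine ⟨(ψ.symm x).1.1, ⟨Finset.mem_univ _,
        π ((ψ.symm x).1.2, (ψ.symm x).2), ?_⟩, ?_⟩
      · rw [hfgrp, Equiv.symm_apply_apply]
        exact ψ.apply_symm_apply x
      · rintro b ⟨-, y, hy⟩
        rw [hfgrp] at hy
        have h1 : ((b, (π.symm y).1), (π.symm y).2) = ψ.symm x := by
          rw [← hy, Equiv.symm_apply_apply]
        exact congrArg (fun z => z.1.1) h1
    have hEg : ∀ b ∈ (Finset.univ : Finset (Fin u)), ∀ e ∈ completeEdges (Fin (g * t)),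
        Sym2.map (fgrp b) e ∈ completeEdges (Fin v) := by
      intro b _hb e he
      obtain ⟨a, c, hac, rfl⟩ := completeEdges_rep he
      rw [Sym2.map_pair_eq, mem_completeEdges]
      exact fun hcontra => hac (hinjg b hcontra)
    -- block subsystem facts
    have hinjb : ∀ i, ∀ b ∈ C i, Function.Injective (fblk b) := by
      intro i b hb p q hpq
      rw [hfblk, hfblk] at hpq
      have h1 := ψ.injective hpq
      have e1 : p.1 = q.1 := ordOf_inj xj (hCb i b hb) (congrArg Prod.fst h1)
      have e2 := congrArg Prod.snd h1
      exact Prod.ext e1 e2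
    have hpartb : ∀ i, ∀ x : Fin v, ∃! b, b ∈ C i ∧ ∃ p, fblk b p = x := by
      intro i x
      obtain ⟨b, ⟨hbC, hxb⟩, hbu⟩ := (hC i).2 (ψ.symm x).1 (Finset.mem_univ _)
      obtain ⟨k, hk⟩ := ordOf_surj xj (hCb i b hbC) hxb
      refine ⟨b, ⟨hbC, (k, (ψ.symm x).2), ?_⟩, ?_⟩
      · rw [hfblk]
        show ψ (ordOf xj b k, (ψ.symm x).2) = x
        rw [hk]
        exact ψ.apply_symm_apply x
      · rintro b' ⟨hb', p, hp⟩
        rw [hfblk] at hp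
        have h1 : (ordOf xj b' p.1, p.2) = ψ.symm x := by
          rw [← hp, Equiv.symm_apply_apply]
        have h2 : ordOf xj b' p.1 = (ψ.symm x).1 := congrArg Prod.fst h1
        exact hbu b' ⟨hb', h2 ▸ ordOf_mem xj (hCb i b' hb') p.1⟩
    have hEb : ∀ i, ∀ b ∈ C i, ∀ e ∈ multipartiteEdges 4 t,
        Sym2.map (fblk b) e ∈ completeEdges (Fin v) := by
      intro i b hb e he
      obtain ⟨p, q, hpq, rfl⟩ := multipartiteEdges_rep he
      rw [Sym2.map_pair_eq, mem_completeEdges]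
      intro hcontra
      exact hpq (congrArg Prod.fst (hinjb i b hb hcontra))
    -- key structural lemmas
    have keyg : ∀ (x' y' : Fin v) (b : Fin u), ∀ e ∈ completeEdges (Fin (g * t)),
        Sym2.map (fgrp b) e = s(x', y') →
        b = (ψ.symm x').1.1 ∧ b = (ψ.symm y').1.1 ∧
          e = s(π ((ψ.symm x').1.2, (ψ.symm x').2),
                π ((ψ.symm y').1.2, (ψ.symm y').2)) := by
      intro x' y' b e he hmap
      obtain ⟨a, c, hac, rfl⟩ := completeEdges_rep he
      rw [Sym2.map_pair_eq, Sym2.eq_iff] at hmap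
      have main : ∀ (z w : Fin v) (a' c' : Fin (g * t)), fgrp b a' = z → fgrp b c' = w →
          b = (ψ.symm z).1.1 ∧ b = (ψ.symm w).1.1 ∧
            a' = π ((ψ.symm z).1.2, (ψ.symm z).2) ∧
            c' = π ((ψ.symm w).1.2, (ψ.symm w).2) := by
        intro z w a' c' hz hw
        rw [hfgrp] at hz hw
        have hz1 : ((b, (π.symm a').1), (π.symm a').2) = ψ.symm z := by
          rw [← hz, Equiv.symm_apply_apply]
        have hw1 : ((b, (π.symm c').1), (π.symm c').2) = ψ.symm w := by
          rw [← hw, Equiv.symm_apply_apply]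
        refine ⟨congrArg (fun r => r.1.1) hz1, congrArg (fun r => r.1.1) hw1, ?_, ?_⟩
        · have heq : π.symm a' = ((ψ.symm z).1.2, (ψ.symm z).2) :=
            Prod.ext (congrArg (fun r => r.1.2) hz1) (congrArg (fun r => r.2) hz1)
          rw [← heq, Equiv.apply_symm_apply]
        · have heq : π.symm c' = ((ψ.symm w).1.2, (ψ.symm w).2) :=
            Prod.ext (congrArg (fun r => r.1.2) hw1) (congrArg (fun r => r.2) hw1)
          rw [← heq, Equiv.apply_symm_apply]
      rcases hmap with ⟨hz, hw⟩ | ⟨hz, hw⟩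
      · obtain ⟨e1, e2, e3, e4⟩ := main x' y' a c hz hw
        exact ⟨e1, e2, by rw [e3, e4]⟩
      · obtain ⟨e1, e2, e3, e4⟩ := main y' x' a c hz hw
        refine ⟨e2, e1, ?_⟩
        rw [e3, e4]
        exact Sym2.eq_swap
    have keyb : ∀ (x' y' : Fin v) (i : Fin h), ∀ b ∈ C i, ∀ e ∈ multipartiteEdges 4 t,
        Sym2.map (fblk b) e = s(x', y') →
        ∃ k l : Fin 4, k ≠ l ∧ ordOf xj b k = (ψ.symm x').1 ∧
          ordOf xj b l = (ψ.symm y').1 ∧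
          e = s((k, (ψ.symm x').2), (l, (ψ.symm y').2)) := by
      intro x' y' i b hb e he hmap
      obtain ⟨p, q, hpq, rfl⟩ := multipartiteEdges_rep he
      rw [Sym2.map_pair_eq, Sym2.eq_iff] at hmap
      have main : ∀ (z w : Fin v) (p' q' : Fin 4 × Fin t), fblk b p' = z → fblk b q' = w →
          ordOf xj b p'.1 = (ψ.symm z).1 ∧ p'.2 = (ψ.symm z).2 ∧
          ordOf xj b q'.1 = (ψ.symm w).1 ∧ q'.2 = (ψ.symm w).2 := by
        intro z w p' q' hz hw
        rw [hfblk] at hz hw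
        have hz1 : (ordOf xj b p'.1, p'.2) = ψ.symm z := by
          rw [← hz, Equiv.symm_apply_apply]
        have hw1 : (ordOf xj b q'.1, q'.2) = ψ.symm w := by
          rw [← hw, Equiv.symm_apply_apply]
        exact ⟨congrArg Prod.fst hz1, congrArg Prod.snd hz1,
          congrArg Prod.fst hw1, congrArg Prod.snd hw1⟩
      rcases hmap with ⟨hz, hw⟩ | ⟨hz, hw⟩
      · obtain ⟨e1, e2, e3, e4⟩ := main x' y' p q hz hw
        refine ⟨p.1, q.1, hpq, e1, e3, ?_⟩
        rw [← e2, ← e4]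
      · obtain ⟨e1, e2, e3, e4⟩ := main y' x' p q hz hw
        refine ⟨q.1, p.1, fun hc => hpq hc.symm, e3, e1, ?_⟩
        rw [← e2, ← e4]
        exact Sym2.eq_swap
    -- assemble
    show HasUniformDecomp (completeEdges (Fin v)) (r₂ + ∑ i, r₁ i) (s₂ + ∑ i, s₁ i)
    refine combine (fun b _ => hinjg b) hpartg hEg hinjb hpartb hEb
      hg3 hg4 hgc hb3 hb4 hbc ?_
    intro e' he'
    obtain ⟨x', y', hne, rfl⟩ := completeEdges_rep he'
    by_cases hxy : (ψ.symm x').1.1 = (ψ.symm y').1.1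
    · left
      have hxyne : ψ.symm x' ≠ ψ.symm y' := fun hc => hne (by
        have hc2 := congrArg ψ hc
        rwa [Equiv.apply_symm_apply, Equiv.apply_symm_apply] at hc2)
      refine ⟨(ψ.symm x').1.1, Finset.mem_univ _,
        s(π ((ψ.symm x').1.2, (ψ.symm x').2), π ((ψ.symm y').1.2, (ψ.symm y').2)),
        ?_, ?_, ?_, ?_⟩
      · rw [mem_completeEdges]
        intro hc
        apply hxyne
        have h5 := π.injective hc
        have e1 : (ψ.symm x').1.2 = (ψ.symm y').1.2 := congrArg Prod.fst h5
        have e2 := congrArg Prod.snd h5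
        have e3 : (ψ.symm x').1 = (ψ.symm y').1 := Prod.ext hxy e1
        exact Prod.ext e3 e2
      · rw [Sym2.map_pair_eq, hfgrp, hfgrp, Equiv.symm_apply_apply,
          Equiv.symm_apply_apply, Sym2.eq_iff]
        refine Or.inl ⟨ψ.apply_symm_apply x', ?_⟩
        rw [hxy]
        exact ψ.apply_symm_apply y'
      · intro b hbmem e he hmap
        obtain ⟨e1, e2, e3⟩ := keyg x' y' b e he hmap
        exact ⟨e1, e3⟩
      · intro i b hb e he hmap
        obtain ⟨k, l, hkl, hk, hl, -⟩ := keyb x' y' i b hb e he hmap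
        have hne1 : (ψ.symm x').1 ≠ (ψ.symm y').1 := by
          rw [← hk, ← hl]
          exact fun hc => hkl (ordOf_inj xj (hCb i b hb) hc)
        have hmem : s((ψ.symm x').1, (ψ.symm y').1) ∈ blockEdges b := by
          rw [mem_blockEdges]
          exact ⟨hk ▸ ordOf_mem xj (hCb i b hb) k, hl ▸ ordOf_mem xj (hCb i b hb) l, hne1⟩
        have hmp := hCe i b hb hmem
        rw [mem_multipartiteEdges] at hmp
        exact hmp hxy
    · right
      have hxy1 : (ψ.symm x').1 ≠ (ψ.symm y').1 := fun hc => hxy (congrArg Prod.fst hc)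
      have hE0 : s((ψ.symm x').1, (ψ.symm y').1) ∈ multipartiteEdges u g :=
        mem_multipartiteEdges.2 hxy
      have hsum := hCc _ hE0
      obtain ⟨i₀, hi1, hi0⟩ := nat_sum_eq_one hsum
      obtain ⟨b₀, hb0eq⟩ := Finset.card_eq_one.1 hi1
      have hb0mem : b₀ ∈ (C i₀).filter
          (fun b => s((ψ.symm x').1, (ψ.symm y').1) ∈ blockEdges b) :=
        hb0eq ▸ Finset.mem_singleton_self b₀
      obtain ⟨hbC, hbE⟩ := Finset.mem_filter.1 hb0mem
      rw [mem_blockEdges] at hbE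
      obtain ⟨hx1b, hy1b, -⟩ := hbE
      obtain ⟨k, hk⟩ := ordOf_surj xj (hCb i₀ b₀ hbC) hx1b
      obtain ⟨l, hl⟩ := ordOf_surj xj (hCb i₀ b₀ hbC) hy1b
      have hkl : k ≠ l := fun hc => hxy1 (by rw [← hk, ← hl, hc])
      refine ⟨i₀, b₀, hbC, s((k, (ψ.symm x').2), (l, (ψ.symm y').2)),
        mem_multipartiteEdges.2 hkl, ?_, ?_, ?_, ?_⟩
      · rw [Sym2.map_pair_eq, hfblk, hfblk]
        show s(ψ (ordOf xj b₀ k, (ψ.symm x').2), ψ (ordOf xj b₀ l, (ψ.symm y').2)) = _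
        rw [hk, hl, Sym2.eq_iff]
        exact Or.inl ⟨ψ.apply_symm_apply x', ψ.apply_symm_apply y'⟩
      · intro b hb e he hmap
        obtain ⟨k', l', hkl', hk', hl', heq⟩ := keyb x' y' i₀ b hb e he hmap
        have hbb : b = b₀ := by
          obtain ⟨bb, hbbp, hbbu⟩ := (hC i₀).2 (ψ.symm x').1 (Finset.mem_univ _)
          have e1 : b = bb := hbbu b ⟨hb, hk' ▸ ordOf_mem xj (hCb i₀ b hb) k'⟩
          have e2 : b₀ = bb := hbbu b₀ ⟨hbC, hx1b⟩
          rw [e1, e2]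
        subst hbb
        have ek : k' = k := ordOf_inj xj (hCb i₀ b hbC) (hk'.trans hk.symm)
        have el : l' = l := ordOf_inj xj (hCb i₀ b hbC) (hl'.trans hl.symm)
        refine ⟨rfl, ?_⟩
        rw [heq, ek, el]
      · intro i hii b hb e he hmap
        obtain ⟨k', l', hkl', hk', hl', -⟩ := keyb x' y' i b hb e he hmap
        have hmem : s((ψ.symm x').1, (ψ.symm y').1) ∈ blockEdges b := by
          rw [mem_blockEdges]
          exact ⟨hk' ▸ ordOf_mem xj (hCb i b hb) k',
            hl' ▸ ordOf_mem xj (hCb i b hb) l', hxy1⟩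
        have hzero := hi0 i hii
        rw [Finset.card_eq_zero, Finset.filter_eq_empty_iff] at hzero
        exact hzero hb hmem
      · intro b hbmem e he hmap
        obtain ⟨e1, e2, -⟩ := keyg x' y' b e he hmap
        exact hxy (e1 ▸ e2)
end

section
/- There exists a (K₂, K_{1,3})-URD(8; 1, 4); that is, the edge set of the complete graph K₈ can be decomposed into 1 perfect matching and 4 parallel classes each consisting of two vertex-disjoint copies of K_{1,3} covering all 8 vertices. -/
open Finset

lemma isMatchingClass_of {V : Type} [DecidableEq V] {E : Finset (Sym2 V)} {P : Finset V}
    {M : Finset (Sym2 V)}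
    (h1 : ∀ e ∈ M, e ∈ E) (h2 : ∀ e ∈ M, ∀ x ∈ e, x ∈ P)
    (h3 : ∀ x ∈ P, ∃ e ∈ M, x ∈ e)
    (h4 : ∀ x ∈ P, ∀ e ∈ M, ∀ f ∈ M, x ∈ e → x ∈ f → e = f) :
    IsMatchingClass E P M := by
  refine ⟨h1, h2, fun x hx => ?_⟩
  obtain ⟨e, he, hxe⟩ := h3 x hx
  exact ⟨e, ⟨he, hxe⟩, fun f ⟨hf, hxf⟩ => h4 x hx f hf e he hxf hxe⟩

lemma isStarClass_of {V : Type} [DecidableEq V] {E : Finset (Sym2 V)} {P : Finset V}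
    {C : Finset (V × Finset V)}
    (h1 : ∀ b ∈ C, b.2.card = 3 ∧ b.1 ∉ b.2 ∧ starEdges b ⊆ E ∧ starVerts b ⊆ P)
    (h3 : ∀ x ∈ P, ∃ b ∈ C, x ∈ starVerts b)
    (h4 : ∀ x ∈ P, ∀ b ∈ C, ∀ b' ∈ C, x ∈ starVerts b → x ∈ starVerts b' → b = b') :
    IsStarClass E P C := by
  refine ⟨h1, fun x hx => ?_⟩
  obtain ⟨b, hb, hxb⟩ := h3 x hx
  exact ⟨b, ⟨hb, hxb⟩, fun b' ⟨hb', hxb'⟩ => h4 x hx b' hb' b hb hxb' hxb⟩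

lemma sc0 : IsStarClass (completeEdges (Fin 8)) Finset.univ
    ({(0, {1,2,3}), (4, {5,6,7})} : Finset (Fin 8 × Finset (Fin 8))) := by
  apply isStarClass_of <;>
    simp only [Finset.forall_mem_insert, Finset.exists_mem_insert,
      Finset.mem_singleton, forall_eq, exists_eq_left] <;>
    decide

lemma sc1 : IsStarClass (completeEdges (Fin 8)) Finset.univ
    ({(5, {0,1,2}), (3, {4,6,7})} : Finset (Fin 8 × Finset (Fin 8))) := by
  apply isStarClass_of <;>
    simp only [Finset.forall_mem_insert, Finset.exists_mem_insert,
      Finset.mem_singleton, forall_eq, exists_eq_left] <;>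
    decide

lemma sc2 : IsStarClass (completeEdges (Fin 8)) Finset.univ
    ({(6, {0,1,5}), (2, {3,4,7})} : Finset (Fin 8 × Finset (Fin 8))) := by
  apply isStarClass_of <;>
    simp only [Finset.forall_mem_insert, Finset.exists_mem_insert,
      Finset.mem_singleton, forall_eq, exists_eq_left] <;>
    decide

lemma sc3 : IsStarClass (completeEdges (Fin 8)) Finset.univ
    ({(7, {0,5,6}), (1, {2,3,4})} : Finset (Fin 8 × Finset (Fin 8))) := by
  apply isStarClass_of <;>
    simp only [Finset.forall_mem_insert, Finset.exists_mem_insert,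
      Finset.mem_singleton, forall_eq, exists_eq_left] <;>
    decide

lemma mc0 : IsMatchingClass (completeEdges (Fin 8)) Finset.univ
    ({s(1,7), s(3,5), s(0,4), s(2,6)} : Finset (Sym2 (Fin 8))) := by
  apply isMatchingClass_of <;> decide

/-- There exists a `(K₂, K_{1,3})`-URD(8; 1, 4). -/
theorem URD_8 : IsURD 8 1 4 := by
  refine ⟨![], ![], ![{s(1,7), s(3,5), s(0,4), s(2,6)}],
    ![{(0, {1,2,3}), (4, {5,6,7})},
      {(5, {0,1,2}), (3, {4,6,7})},
      {(6, {0,1,5}), (2, {3,4,7})},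
      {(7, {0,5,6}), (1, {2,3,4})}],
    fun i => i.elim0, fun j => j.elim0, ?_, ?_, ?_⟩
  · intro i; fin_cases i; exact mc0
  · intro j; fin_cases j
    · exact sc0
    · exact sc1
    · exact sc2
    · exact sc3
  · decide
end
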